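/- Let T be a spherically homogeneous rooted tree, let G ≤ Aut(T) be a branch group, and let N be a nontrivial normal subgroup of G. Then the quotient G/N has property BF: every subgroup of G/N of finite bi-index has finite index in G/N. -/

import Mathlib

open scoped Pointwise

/-! ## Spherically homogeneous rooted trees -/

/-- A vertex of the spherically homogeneous rooted tree over the shifted sequence of
alphabets `i ↦ A (i + k)`: a finite word whose `j`-th letter belongs to `A (j + k)`. -/
def Vtx (A : ℕ → Type*) (k : ℕ) : Type _ :=
  {l : List (Σ i, A i) // ∀ j (h : j < l.length), (l[j]'h).1 = j + k}

namespace Vtx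

variable {A : ℕ → Type*}

/-- The length of a vertex (the distance to the root). -/
def len {k : ℕ} (v : Vtx A k) : ℕ := v.1.length

/-- The prefix relation on vertices. -/
def Pre {k : ℕ} (v w : Vtx A k) : Prop := v.1 <+: w.1

/-- The `n`-th level of the tree: all vertices of length `n`. -/
def level (A : ℕ → Type*) (k : ℕ) (n : ℕ) : Set (Vtx A k) := {v | v.len = n}

/-- Concatenation of a vertex of the tree with a word over the shifted alphabets. -/
def cat (v : Vtx A 0) (w : Vtx A v.len) : Vtx A 0 :=
  ⟨v.1 ++ w.1, by
    intro j h
    by_cases hj : j < v.1.length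
    · rw [List.getElem_append_left hj]
      exact v.2 j hj
    · push_neg at hj
      rw [List.getElem_append_right hj]
      have h2 : j - v.1.length < w.1.length := by
        have h3 := h
        simp only [List.length_append] at h3
        omega
      exact (w.2 (j - v.1.length) h2).trans
        (by show j - v.1.length + v.1.length = j + 0; omega)⟩

/-- Deleting a prefix of length `n` from a vertex. -/
def dropPre (n : ℕ) (u : Vtx A 0) : Vtx A n :=
  ⟨u.1.drop n, by
    intro j h
    have h' : n + j < u.1.length := by
      simp only [List.length_drop] at h
      omega
    rw [List.getElem_drop]
    exact (u.2 (n + j) h').trans (by omega)⟩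

end Vtx

/-- The full automorphism group of the rooted tree `T_k`:
bijections of the vertex set preserving word length and the prefix relation. -/
def treeAut (A : ℕ → Type*) (k : ℕ) : Subgroup (Equiv.Perm (Vtx A k)) where
  carrier := {f | (∀ v, (f v).len = v.len) ∧ ∀ v w, Vtx.Pre (f v) (f w) ↔ Vtx.Pre v w}
  one_mem' := ⟨fun _ => rfl, fun _ _ => Iff.rfl⟩
  mul_mem' := by
    rintro f g ⟨hf1, hf2⟩ ⟨hg1, hg2⟩
    constructor
    · intro v
      have : (f * g) v = f (g v) := rfl
      rw [this]
      exact (hf1 (g v)).trans (hg1 v)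
    · intro v w
      have e1 : (f * g) v = f (g v) := rfl
      have e2 : (f * g) w = f (g w) := rfl
      rw [e1, e2]
      exact (hf2 (g v) (g w)).trans (hg2 v w)
  inv_mem' := by
    rintro f ⟨hf1, hf2⟩
    constructor
    · intro v
      conv_rhs => rw [← (Equiv.apply_symm_apply f v : f (f⁻¹ v) = v)]
      exact (hf1 _).symm
    · intro v w
      conv_rhs => rw [← (Equiv.apply_symm_apply f v : f (f⁻¹ v) = v), ← (Equiv.apply_symm_apply f w : f (f⁻¹ w) = w)]
      exact (hf2 _ _).symm

variable {A : ℕ → Type*}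

/-- The stabiliser `St_H(v)` of a vertex `v` in a subgroup `H ≤ Perm`. -/
def vstab {k : ℕ} (H : Subgroup (Equiv.Perm (Vtx A k))) (v : Vtx A k) :
    Subgroup (Equiv.Perm (Vtx A k)) where
  carrier := {g | g ∈ H ∧ g v = v}
  one_mem' := ⟨H.one_mem, rfl⟩
  mul_mem' := by
    rintro a b ⟨ha, ha'⟩ ⟨hb, hb'⟩
    refine ⟨H.mul_mem ha hb, ?_⟩
    have : (a * b) v = a (b v) := rfl
    rw [this, hb', ha']
  inv_mem' := by
    rintro a ⟨ha, ha'⟩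
    refine ⟨H.inv_mem ha, ?_⟩
    conv_lhs => rw [← ha']
    exact Equiv.symm_apply_apply a v

/-- The stabiliser `St_H(n)` of the `n`-th level. -/
def levStab {k : ℕ} (H : Subgroup (Equiv.Perm (Vtx A k))) (n : ℕ) :
    Subgroup (Equiv.Perm (Vtx A k)) where
  carrier := {g | g ∈ H ∧ ∀ v : Vtx A k, v.len = n → g v = v}
  one_mem' := ⟨H.one_mem, fun _ _ => rfl⟩
  mul_mem' := by
    rintro a b ⟨ha, ha'⟩ ⟨hb, hb'⟩
    refine ⟨H.mul_mem ha hb, fun v hv => ?_⟩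
    have : (a * b) v = a (b v) := rfl
    rw [this, hb' v hv, ha' v hv]
  inv_mem' := by
    rintro a ⟨ha, ha'⟩
    refine ⟨H.inv_mem ha, fun v hv => ?_⟩
    conv_lhs => rw [← ha' v hv]
    exact Equiv.symm_apply_apply a v

/-- The rigid stabiliser `rist_H(v)`: elements of `H` fixing every vertex that does not
have `v` as a prefix. -/
def rist {k : ℕ} (H : Subgroup (Equiv.Perm (Vtx A k))) (v : Vtx A k) :
    Subgroup (Equiv.Perm (Vtx A k)) where
  carrier := {g | g ∈ H ∧ ∀ w : Vtx A k, ¬ Vtx.Pre v w → g w = w}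
  one_mem' := ⟨H.one_mem, fun _ _ => rfl⟩
  mul_mem' := by
    rintro a b ⟨ha, ha'⟩ ⟨hb, hb'⟩
    refine ⟨H.mul_mem ha hb, fun w hw => ?_⟩
    have : (a * b) w = a (b w) := rfl
    rw [this, hb' w hw, ha' w hw]
  inv_mem' := by
    rintro a ⟨ha, ha'⟩
    refine ⟨H.inv_mem ha, fun w hw => ?_⟩
    conv_lhs => rw [← ha' w hw]
    exact Equiv.symm_apply_apply a w

/-- The rigid level stabiliser `rist_H(n)`: the subgroup generated by the rigid
stabilisers of the vertices on the `n`-th level. -/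
def ristLev {k : ℕ} (H : Subgroup (Equiv.Perm (Vtx A k))) (n : ℕ) :
    Subgroup (Equiv.Perm (Vtx A k)) :=
  ⨆ v ∈ {v : Vtx A k | v.len = n}, rist H v

/-- `G` acts spherically transitively: transitively on every level of the tree. -/
def SphTrans {k : ℕ} (G : Subgroup (Equiv.Perm (Vtx A k))) : Prop :=
  ∀ v w : Vtx A k, v.len = w.len → ∃ g ∈ G, g v = w

/-- `G ≤ Aut(T_k)` is a branch group. -/
structure IsBranch {k : ℕ} (G : Subgroup (Equiv.Perm (Vtx A k))) : Prop where
  le_aut : G ≤ treeAut A k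
  trans : SphTrans G
  rist_fi : ∀ n : ℕ, (ristLev G n).relIndex G ≠ 0

/-- `G ≤ Aut(T_k)` is a weakly branch group. -/
structure IsWeaklyBranch {k : ℕ} (G : Subgroup (Equiv.Perm (Vtx A k))) : Prop where
  le_aut : G ≤ treeAut A k
  trans : SphTrans G
  rist_nt : ∀ n : ℕ, ristLev G n ≠ ⊥

/-! ## Sections -/

namespace Vtx

theorem dropPre_cat (v : Vtx A 0) (w : Vtx A v.len) : dropPre v.len (cat v w) = w := by
  apply Subtype.ext
  show (v.1 ++ w.1).drop v.1.length = w.1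
  exact List.drop_left (l₁ := v.1) (l₂ := w.1)

theorem pre_cat (v : Vtx A 0) (w : Vtx A v.len) : Pre v (cat v w) := ⟨w.1, rfl⟩

theorem cat_dropPre {v u : Vtx A 0} (h : Pre v u) : cat v (dropPre v.len u) = u := by
  apply Subtype.ext
  show v.1 ++ u.1.drop v.1.length = u.1
  obtain ⟨t, ht⟩ := h
  rw [← ht, List.drop_left]

end Vtx

/-- The section map `φ_v` at the level of plain functions. -/
def secFun (v : Vtx A 0) (f : Equiv.Perm (Vtx A 0)) : Vtx A v.len → Vtx A v.len :=
  fun w => Vtx.dropPre v.len (f (Vtx.cat v w))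

theorem secFun_key {v : Vtx A 0} {f : Equiv.Perm (Vtx A 0)}
    (hf : f ∈ vstab (treeAut A 0) v) (w : Vtx A v.len) :
    Vtx.cat v (secFun v f w) = f (Vtx.cat v w) := by
  obtain ⟨⟨hlen, hpre⟩, hfix⟩ := hf
  apply Vtx.cat_dropPre
  have := (hpre v (Vtx.cat v w))
  rw [hfix] at this
  exact this.mpr (Vtx.pre_cat v w)

theorem secFun_mul {v : Vtx A 0} {f g : Equiv.Perm (Vtx A 0)}
    (hf : f ∈ vstab (treeAut A 0) v) (hg : g ∈ vstab (treeAut A 0) v) :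
    secFun v (f * g) = secFun v f ∘ secFun v g := by
  funext w
  show Vtx.dropPre v.len ((f * g) (Vtx.cat v w)) = Vtx.dropPre v.len (f (Vtx.cat v (secFun v g w)))
  rw [secFun_key hg w]
  rfl

theorem secFun_one (v : Vtx A 0) : secFun v (1 : Equiv.Perm (Vtx A 0)) = id := by
  funext w
  show Vtx.dropPre v.len ((1 : Equiv.Perm (Vtx A 0)) (Vtx.cat v w)) = w
  rw [Equiv.Perm.one_apply]
  exact Vtx.dropPre_cat v w

theorem secFun_bij {v : Vtx A 0} {f : Equiv.Perm (Vtx A 0)}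
    (hf : f ∈ vstab (treeAut A 0) v) : Function.Bijective (secFun v f) := by
  rw [Function.bijective_iff_has_inverse]
  refine ⟨secFun v f⁻¹, fun w => ?_, fun w => ?_⟩
  · have h1 := congrFun (secFun_mul (inv_mem hf) hf) w
    rw [inv_mul_cancel, secFun_one] at h1
    exact h1.symm
  · have h1 := congrFun (secFun_mul hf (inv_mem hf)) w
    rw [mul_inv_cancel, secFun_one] at h1
    exact h1.symm

open Classical in
noncomputable def secPerm (v : Vtx A 0) (f : Equiv.Perm (Vtx A 0)) :
    Equiv.Perm (Vtx A v.len) :=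
  if h : Function.Bijective (secFun v f) then Equiv.ofBijective _ h else 1

theorem secPerm_coe {v : Vtx A 0} {f : Equiv.Perm (Vtx A 0)}
    (hf : f ∈ vstab (treeAut A 0) v) : ⇑(secPerm v f) = secFun v f := by
  unfold secPerm
  rw [dif_pos (secFun_bij hf)]
  rfl

/-- The section homomorphism `φ_v : St_{Aut(T)}(v) → Perm(T_{|v|})`. -/
noncomputable def phiHom (v : Vtx A 0) :
    ↥(vstab (treeAut A 0) v) →* Equiv.Perm (Vtx A v.len) where
  toFun f := secPerm v f.1
  map_one' := by
    apply Equiv.ext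
    intro w
    show secPerm v (1 : Equiv.Perm (Vtx A 0)) w = (1 : Equiv.Perm (Vtx A v.len)) w
    rw [secPerm_coe (one_mem (vstab (treeAut A 0) v)), secFun_one]
    rfl
  map_mul' := by
    intro f g
    apply Equiv.ext
    intro w
    show secPerm v (f.1 * g.1) w = (secPerm v f.1 * secPerm v g.1) w
    have e : (secPerm v f.1 * secPerm v g.1) w = secPerm v f.1 (secPerm v g.1 w) := rfl
    rw [e, secPerm_coe (mul_mem f.2 g.2), secPerm_coe f.2, secPerm_coe g.2,
      secFun_mul f.2 g.2]
    rfl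

/-- The image `φ_v(St_H(v)) ≤ Perm(T_{|v|})` of the stabiliser of `v` in `H` under the
section homomorphism at `v`; for `H ≤ G ≤ Aut(T)` this is the subgroup written `H_v`. -/
noncomputable def secSub (v : Vtx A 0) (H : Subgroup (Equiv.Perm (Vtx A 0))) :
    Subgroup (Equiv.Perm (Vtx A v.len)) :=
  Subgroup.map (phiHom v) ((vstab H v).subgroupOf (vstab (treeAut A 0) v))

/-- A subgroup `H ≤ G` has finite bi-index if the set of double cosets
`{HgH : g ∈ G}` is finite. -/
def FiniteBiIndex {G : Type*} [Group G] (H : Subgroup G) : Prop :=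
  {S : Set G | ∃ g : G, S = (H : Set G) * {g} * (H : Set G)}.Finite

/-- The set of double cosets of a subgroup `H` of a group `M` with representatives in a
subgroup `G` of `M`; for `H ≤ G` this is the set of double cosets `H\G/H`. -/
def doubleCosets {M : Type*} [Group M] (G H : Subgroup M) : Set (Set M) :=
  {S : Set M | ∃ g ∈ G, S = (H : Set M) * {g} * (H : Set M)}

/-- The pro-normal closure of a subgroup `H ≤ G`: the intersection of the subsets `HN`,
over all nontrivial normal subgroups `N` of `G`. -/
def pronormalClosure {G : Type*} [Group G] (H : Subgroup G) : Subgroup G where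
  carrier := ⋂ N ∈ {N : Subgroup G | N.Normal ∧ N ≠ ⊥}, (H : Set G) * (N : Set G)
  one_mem' := by
    simp only [Set.mem_iInter]
    rintro N ⟨hN, -⟩
    exact ⟨1, H.one_mem, 1, N.one_mem, mul_one 1⟩
  mul_mem' := by
    intro a b ha hb
    simp only [Set.mem_iInter] at ha hb ⊢
    rintro N hN
    obtain ⟨h₁, hh₁, n₁, hn₁, rfl⟩ := ha N hN
    obtain ⟨h₂, hh₂, n₂, hn₂, rfl⟩ := hb N hN
    refine ⟨h₁ * h₂, H.mul_mem hh₁ hh₂, (h₂⁻¹ * n₁ * h₂) * n₂, ?_, by group⟩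
    refine N.mul_mem ?_ hn₂
    have := hN.1.conj_mem n₁ hn₁ h₂⁻¹
    simpa using this
  inv_mem' := by
    intro a ha
    simp only [Set.mem_iInter] at ha ⊢
    rintro N hN
    obtain ⟨h, hh, n, hn, rfl⟩ := ha N hN
    refine ⟨h⁻¹, H.inv_mem hh, h * n⁻¹ * h⁻¹, hN.1.conj_mem n⁻¹ (N.inv_mem hn) h, by group⟩

/-- A subgroup `H ≤ G` is quasi-prodense if its pro-normal closure has finite index. -/
def QuasiProdense {G : Type*} [Group G] (H : Subgroup G) : Prop :=
  (pronormalClosure H).index ≠ 0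

/-- `K` is a normal subgroup of the subgroup `H` (both subgroups of an ambient group). -/
def NormalIn {M : Type*} [Group M] (H K : Subgroup M) : Prop :=
  K ≤ H ∧ ∀ h ∈ H, ∀ k ∈ K, h * k * h⁻¹ ∈ K

/-- `K` is a subnormal subgroup of the subgroup `H`. -/
def SubnormalIn {M : Type*} [Group M] (H K : Subgroup M) : Prop :=
  ∃ (m : ℕ) (c : ℕ → Subgroup M), c 0 = K ∧ c m = H ∧ ∀ i < m, NormalIn (c (i + 1)) (c i)

/-- The iterated derived subgroups of a subgroup. -/
def iterDerived {M : Type*} [Group M] (H : Subgroup M) : ℕ → Subgroup M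
  | 0 => H
  | (k + 1) => ⁅iterDerived H k, iterDerived H k⁆


section AuxBranch

variable {A : ℕ → Type*}

theorem mem_rist_iff {k : ℕ} {G : Subgroup (Equiv.Perm (Vtx A k))} {u : Vtx A k}
    {z : Equiv.Perm (Vtx A k)} :
    z ∈ rist G u ↔ z ∈ G ∧ ∀ w, ¬ Vtx.Pre u w → z w = w := Iff.rfl

theorem mem_treeAut_iff {k : ℕ} {f : Equiv.Perm (Vtx A k)} :
    f ∈ treeAut A k ↔ (∀ v, (f v).len = v.len) ∧
      ∀ v w, Vtx.Pre (f v) (f w) ↔ Vtx.Pre v w := Iff.rfl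

theorem rist_pre {G : Subgroup (Equiv.Perm (Vtx A 0))} {u p : Vtx A 0}
    {z : Equiv.Perm (Vtx A 0)} (hz : z ∈ rist G u) (hp : Vtx.Pre u p) :
    Vtx.Pre u (z p) := by
  by_contra h
  have h2 := (mem_rist_iff.mp ((rist G u).inv_mem hz)).2 (z p) h
  rw [show z⁻¹ (z p) = p from Equiv.symm_apply_apply z p] at h2
  rw [← h2] at h
  exact h hp

theorem rist_commute {G : Subgroup (Equiv.Perm (Vtx A 0))} {u w : Vtx A 0}
    (hdisj : ∀ p, Vtx.Pre u p → Vtx.Pre w p → False)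
    {x y : Equiv.Perm (Vtx A 0)} (hx : x ∈ rist G u) (hy : y ∈ rist G w) :
    x * y = y * x := by
  apply Equiv.ext
  intro p
  simp only [Equiv.Perm.mul_apply]
  by_cases h1 : Vtx.Pre u p
  · have h2 : ¬ Vtx.Pre w p := fun h => hdisj p h1 h
    rw [(mem_rist_iff.mp hy).2 p h2]
    have h3 : Vtx.Pre u (x p) := rist_pre hx h1
    rw [(mem_rist_iff.mp hy).2 (x p) (fun h => hdisj _ h3 h)]
  · by_cases h2 : Vtx.Pre w p
    · have h3 : Vtx.Pre w (y p) := rist_pre hy h2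
      rw [(mem_rist_iff.mp hx).2 p h1,
        (mem_rist_iff.mp hx).2 (y p) (fun h => hdisj _ h h3)]
    · rw [(mem_rist_iff.mp hy).2 p h2, (mem_rist_iff.mp hx).2 p h1,
        (mem_rist_iff.mp hy).2 p h2]

theorem disj_of_ne {u w : Vtx A 0} (hlen : u.len = w.len) (hne : u ≠ w) :
    ∀ p, Vtx.Pre u p → Vtx.Pre w p → False := by
  intro p h1 h2
  apply hne
  apply Subtype.ext
  have h3 : u.1 <+: w.1 := List.prefix_of_prefix_length_le h1 h2 (le_of_eq hlen)
  exact h3.eq_of_length hlen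

theorem rist_conj {G : Subgroup (Equiv.Perm (Vtx A 0))} (hGA : G ≤ treeAut A 0)
    {u : Vtx A 0} {h x : Equiv.Perm (Vtx A 0)} (hh : h ∈ G) (hx : x ∈ rist G u) :
    h * x * h⁻¹ ∈ rist G (h u) := by
  refine mem_rist_iff.mpr
    ⟨mul_mem (mul_mem hh (mem_rist_iff.mp hx).1) (G.inv_mem hh), ?_⟩
  intro w hw
  have hpre := (mem_treeAut_iff.mp (hGA hh)).2
  have h1 : ¬ Vtx.Pre u (h⁻¹ w) := by
    intro hp
    apply hw
    have h2 := (hpre u (h⁻¹ w)).mpr hp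
    rwa [show h (h⁻¹ w) = w from Equiv.apply_symm_apply h w] at h2
  simp only [Equiv.Perm.mul_apply]
  rw [(mem_rist_iff.mp hx).2 _ h1, show h (h⁻¹ w) = w from Equiv.apply_symm_apply h w]

end AuxBranch

theorem bf_of_abelian {Q : Type*} [Group Q] (A : Subgroup Q)
    (hab : ∀ a ∈ A, ∀ b ∈ A, a * b = b * a) (hAi : A.index ≠ 0)
    (K : Subgroup Q) (hK : FiniteBiIndex K) : K.index ≠ 0 := by
  classical
  haveI : A.FiniteIndex := ⟨hAi⟩
  set A0 := A.normalCore with hA0def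
  have hA0le : A0 ≤ A := Subgroup.normalCore_le A
  set B := K ⊓ A0 with hBdef
  have hBrel : (B.subgroupOf K).index ≠ 0 := by
    rw [hBdef, Subgroup.inf_subgroupOf_left]
    have h1 : A0.relIndex K ∣ A0.index := Subgroup.relIndex_dvd_index_of_normal A0 K
    have h2 : A0.index ≠ 0 := Subgroup.FiniteIndex.index_ne_zero
    exact fun h0 => h2 (by rw [← Subgroup.relIndex] at *; exact Nat.eq_zero_of_zero_dvd (h0 ▸ h1))
  haveI hfinKB : Finite (K ⧸ B.subgroupOf K) := by
    have := (Nat.card_ne_zero.mp (by rwa [Subgroup.index] at hBrel)).2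
    exact this
  haveI hfinQA : Finite (Q ⧸ A0) := by
    have h2 : A0.index ≠ 0 := Subgroup.FiniteIndex.index_ne_zero
    exact (Nat.card_ne_zero.mp (by rwa [Subgroup.index] at h2)).2
  haveI := hK.to_subtype
  set D := {S : Set Q | ∃ g : Q, S = (K : Set Q) * {g} * (K : Set Q)} with hDdef
  let ι := (Q ⧸ A0) × {S : Set Q // S ∈ D} × (K ⧸ B.subgroupOf K) × (K ⧸ B.subgroupOf K)
  haveI : Finite ι := by infer_instance
  haveI : Fintype ι := Fintype.ofFinite ι
  let rep : {S : Set Q // S ∈ D} → Q := fun S =>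
    if h : (S.1 ∩ (A0 : Set Q)).Nonempty then h.choose else 1
  have hrep : ∀ S (h : (S.1 ∩ (A0 : Set Q)).Nonempty), rep S ∈ S.1 ∧ rep S ∈ A0 := by
    intro S h
    simpa [rep, dif_pos h] using h.choose_spec
  let u2f : (K ⧸ B.subgroupOf K) → Q := fun t => (((t.out : K) : Q))⁻¹
  let HH : ι → Subgroup Q := fun i => B.map (MulAut.conj (u2f i.2.2.2)⁻¹).toMonoidHom
  let gg : ι → Q := fun i => i.1.out * ((i.2.2.1.out : K) : Q) * rep i.2.1 * u2f i.2.2.2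
  have hHHindex : ∀ i : ι, (HH i).index = B.index := by
    intro i
    refine Subgroup.index_map_eq B ?_ ?_
    · exact (MulAut.conj (u2f i.2.2.2)⁻¹).surjective
    · rw [(MonoidHom.ker_eq_bot_iff _).mpr (MulAut.conj (u2f i.2.2.2)⁻¹).injective]
      exact bot_le
  have hcovers : ⋃ i ∈ (Finset.univ : Finset ι), gg i • (HH i : Set Q) = Set.univ := by
    rw [Set.eq_univ_iff_forall]
    intro x
    -- decompose x = r.out * a with a ∈ A0
    set r : Q ⧸ A0 := QuotientGroup.mk x with hrdef
    have hra : r.out⁻¹ * x ∈ A0 := QuotientGroup.eq.mp (QuotientGroup.out_eq' r)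
    set a := r.out⁻¹ * x with hadef
    have hx_eq : x = r.out * a := by rw [hadef, mul_inv_cancel_left]
    -- the double coset of a
    have hS0 : ((K : Set Q) * {a} * (K : Set Q)) ∈ D := ⟨a, rfl⟩
    have haS0 : a ∈ (K : Set Q) * {a} * (K : Set Q) :=
      ⟨1 * a, ⟨1, K.one_mem, a, rfl, rfl⟩, 1, K.one_mem, by simp⟩
    have hne : (((K : Set Q) * {a} * (K : Set Q)) ∩ (A0 : Set Q)).Nonempty := ⟨a, haS0, hra⟩
    set Ssub : {S : Set Q // S ∈ D} := ⟨_, hS0⟩ with hSsubdef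
    obtain ⟨haSS, haSA⟩ := hrep Ssub hne
    set aS := rep Ssub with haSdef
    -- aS = k1 * a * k2
    obtain ⟨p, ⟨k1, hk1, a', ha', hk1a⟩, k2, hk2, hpk2⟩ := haSS
    rw [Set.mem_singleton_iff] at ha'
    subst ha'
    have haeq : a = k1⁻¹ * aS * k2⁻¹ := by rw [← hpk2, ← hk1a]; group
    -- decompose k1⁻¹ and k2⁻¹
    set k1' : K := ⟨k1, hk1⟩ with hk1'def
    set k2' : K := ⟨k2, hk2⟩ with hk2'def
    obtain ⟨b1', hb1'⟩ := QuotientGroup.mk_out_eq_mul (B.subgroupOf K) k1'⁻¹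
    obtain ⟨b2', hb2'⟩ := QuotientGroup.mk_out_eq_mul (B.subgroupOf K) k2'
    set t1 : K ⧸ B.subgroupOf K := QuotientGroup.mk k1'⁻¹ with ht1def
    set t2 : K ⧸ B.subgroupOf K := QuotientGroup.mk k2' with ht2def
    -- k1⁻¹ = t1.out * (b1'⁻¹), k2⁻¹ = b2' * t2.out⁻¹
    have hk1inv : (k1 : Q)⁻¹ = ((t1.out : K) : Q) * (((b1' : K) : Q))⁻¹ := by
      have h : k1'⁻¹ = t1.out * ((b1' : K))⁻¹ := by rw [hb1']; group
      have := congrArg (fun z : K => (z : Q)) h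
      simpa using this
    have hk2inv : (k2 : Q)⁻¹ = ((b2' : K) : Q) * (((t2.out : K) : Q))⁻¹ := by
      have h : k2'⁻¹ = (b2' : K) * t2.out⁻¹ := by rw [hb2']; group
      have := congrArg (fun z : K => (z : Q)) h
      simpa using this
    have hβ1 : (((b1' : K) : Q))⁻¹ ∈ B :=
      B.inv_mem (Subgroup.mem_subgroupOf.mp b1'.2)
    have hβ2 : ((b2' : K) : Q) ∈ B := Subgroup.mem_subgroupOf.mp b2'.2
    set β1 : Q := (((b1' : K) : Q))⁻¹
    set β2 : Q := ((b2' : K) : Q)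
    set u1 : Q := ((t1.out : K) : Q)
    set u2 : Q := (((t2.out : K) : Q))⁻¹
    have hcomm : β1 * aS = aS * β1 :=
      hab β1 (hA0le (hBdef ▸ hβ1).2) aS (hA0le haSA)
    set i : ι := (r, Ssub, t1, t2) with hidef
    refine Set.mem_biUnion (Finset.mem_univ i) ?_
    have hc : β1 * β2 ∈ B := B.mul_mem hβ1 hβ2
    have hxg : x = gg i * (u2⁻¹ * (β1 * β2) * u2) := by
      have e1 : x = r.out * (u1 * β1 * aS * (β2 * u2)) := by
        rw [hx_eq, haeq, hk1inv, hk2inv]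
      calc x = r.out * (u1 * β1 * aS * (β2 * u2)) := e1
        _ = r.out * u1 * (β1 * aS) * β2 * u2 := by group
        _ = r.out * u1 * (aS * β1) * β2 * u2 := by rw [hcomm]
        _ = (r.out * u1 * aS * u2) * (u2⁻¹ * (β1 * β2) * u2) := by group
        _ = gg i * (u2⁻¹ * (β1 * β2) * u2) := rfl
    rw [Set.mem_smul_set_iff_inv_smul_mem, hxg, smul_eq_mul, inv_mul_cancel_left]
    refine Subgroup.mem_map.mpr ⟨β1 * β2, hc, ?_⟩
    show MulAut.conj (u2f i.2.2.2)⁻¹ (β1 * β2) = _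
    have : u2f i.2.2.2 = u2 := rfl
    rw [this, MulAut.conj_apply]
    group
  obtain ⟨i, -, hfin⟩ := Subgroup.exists_finiteIndex_of_leftCoset_cover hcovers
  have hBi : B.index ≠ 0 := by rw [← hHHindex i]; exact hfin.index_ne_zero
  have hdvd : K.index ∣ B.index := Subgroup.index_dvd_of_le inf_le_left
  exact fun h0 => hBi (by rwa [h0, zero_dvd_iff] at hdvd)

/-- Every proper quotient of a branch group has property `BF`: every subgroup of the
quotient of finite bi-index has finite index. -/
theorem quotient_of_branch_BF
    (A : ℕ → Type*) [∀ i, Fintype (A i)] (hA : ∀ i, 2 ≤ Fintype.card (A i))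
    (G : Subgroup (Equiv.Perm (Vtx A 0))) (hG : IsBranch G)
    (N : Subgroup G) [N.Normal] (hN : N ≠ ⊥)
    (K : Subgroup (G ⧸ N)) (hK : FiniteBiIndex K) : K.index ≠ 0 := by
  classical
  have hGA := hG.le_aut
  set N' : Subgroup (Equiv.Perm (Vtx A 0)) := N.map G.subtype with hN'def
  have hN'conj : ∀ g ∈ G, ∀ m ∈ N', g * m * g⁻¹ ∈ N' := by
    rintro g hg m ⟨m', hm', rfl⟩
    exact ⟨⟨g, hg⟩ * m' * ⟨g, hg⟩⁻¹, ‹N.Normal›.conj_mem m' hm' ⟨g, hg⟩, rfl⟩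
  obtain ⟨g₀, hg₀⟩ := Subgroup.ne_bot_iff_exists_ne_one.mp hN
  set x₀ : Equiv.Perm (Vtx A 0) := (((g₀ : ↥G)) : Equiv.Perm (Vtx A 0)) with hx₀def
  have hx₀N' : x₀ ∈ N' := ⟨(g₀ : ↥G), g₀.2, rfl⟩
  have hx₀G : x₀ ∈ G := (g₀ : ↥G).2
  have hx₀ne : x₀ ≠ 1 := by
    intro h
    apply hg₀
    have h2 : (g₀ : ↥G) = 1 := Subtype.ext (by simpa [hx₀def] using h)
    exact Subtype.ext h2
  obtain ⟨u, hu⟩ : ∃ u, x₀ u ≠ u := by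
    by_contra h
    push_neg at h
    exact hx₀ne (Equiv.ext h)
  have hwlen : (x₀ u).len = u.len := (mem_treeAut_iff.mp (hGA hx₀G)).1 u
  -- commutators in a single rigid stabiliser at level `u.len` lie in `N'`
  have base : ∀ x ∈ rist G u, ∀ y ∈ rist G u, x * y * x⁻¹ * y⁻¹ ∈ N' := by
    intro x hx y hy
    set r := x₀ * x⁻¹ * x₀⁻¹ with hrdef
    have hr : r ∈ rist G (x₀ u) := rist_conj hGA hx₀G ((rist G u).inv_mem hx)
    have hdisj : ∀ p, Vtx.Pre u p → Vtx.Pre (x₀ u) p → False :=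
      disj_of_ne hwlen.symm (Ne.symm hu)
    have hyr : y * r = r * y := rist_commute hdisj hy hr
    have hcN' : x * r ∈ N' := by
      have h1 : x * r = (x * x₀ * x⁻¹) * x₀⁻¹ := by rw [hrdef]; group
      rw [h1]
      exact mul_mem (hN'conj x (mem_rist_iff.mp hx).1 x₀ hx₀N') (N'.inv_mem hx₀N')
    have key : (x * r) * (y * (x * r)⁻¹ * y⁻¹) = x * y * x⁻¹ * y⁻¹ := by
      calc (x * r) * (y * (x * r)⁻¹ * y⁻¹)
          = x * (r * y) * r⁻¹ * x⁻¹ * y⁻¹ := by group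
        _ = x * (y * r) * r⁻¹ * x⁻¹ * y⁻¹ := by rw [hyr]
        _ = x * y * x⁻¹ * y⁻¹ := by group
    rw [← key]
    exact mul_mem hcN' (hN'conj y (mem_rist_iff.mp hy).1 _ (N'.inv_mem hcN'))
  -- the same for every vertex at level `u.len`, by spherical transitivity
  have allv : ∀ v : Vtx A 0, v.len = u.len → ∀ x ∈ rist G v, ∀ y ∈ rist G v,
      x * y * x⁻¹ * y⁻¹ ∈ N' := by
    intro v hv x hx y hy
    obtain ⟨h, hhG, hhu⟩ := hG.trans u v hv.symm
    have hconj : ∀ z, z ∈ rist G v → h⁻¹ * z * h ∈ rist G u := by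
      intro z hz
      have h1 := rist_conj hGA (G.inv_mem hhG) hz
      rw [inv_inv] at h1
      have hv' : h⁻¹ v = u := by rw [← hhu, show h⁻¹ (h u) = u from Equiv.symm_apply_apply h u]
      rwa [hv'] at h1
    have hbase := base _ (hconj x hx) _ (hconj y hy)
    have hkey : x * y * x⁻¹ * y⁻¹ =
        h * ((h⁻¹ * x * h) * (h⁻¹ * y * h) * (h⁻¹ * x * h)⁻¹ * (h⁻¹ * y * h)⁻¹) * h⁻¹ := by
      group
    rw [hkey]
    exact hN'conj h hhG _ hbase
  -- pass to the quotient
  set π : ↥G →* ↥G ⧸ N := QuotientGroup.mk' N with hπdef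
  set Sq : Vtx A 0 → Subgroup (↥G ⧸ N) := fun v => ((rist G v).subgroupOf G).map π
    with hSqdef
  have comm_pair : ∀ v, v.len = u.len → ∀ w, w.len = u.len →
      ∀ a ∈ Sq v, ∀ b ∈ Sq w, a * b = b * a := by
    intro v hv w hw a ha b hb
    obtain ⟨xh, hxh, rfl⟩ := ha
    obtain ⟨yh, hyh, rfl⟩ := hb
    have hxh2 : (xh : Equiv.Perm (Vtx A 0)) ∈ rist G v := hxh
    have hyh2 : (yh : Equiv.Perm (Vtx A 0)) ∈ rist G w := hyh
    clear hxh hyh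
    rename' hxh2 => hxh, hyh2 => hyh
    have hmem : yh⁻¹ * xh⁻¹ * yh * xh ∈ N := by
      by_cases hvw : v = w
      · subst hvw
        have h1 := allv v hv _ ((rist G v).inv_mem hyh) _ ((rist G v).inv_mem hxh)
        rw [inv_inv, inv_inv] at h1
        have h2 : ((yh⁻¹ * xh⁻¹ * yh * xh : ↥G) : Equiv.Perm (Vtx A 0)) ∈ N' := h1
        obtain ⟨m, hm, hme⟩ := h2
        have h3 : m = yh⁻¹ * xh⁻¹ * yh * xh := Subtype.ext hme
        rwa [h3] at hm
      · have hxy : (xh : Equiv.Perm (Vtx A 0)) * yh = (yh : Equiv.Perm (Vtx A 0)) * xh :=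
          rist_commute (disj_of_ne (hv.trans hw.symm) hvw) hxh hyh
        have h2 : (xh : ↥G) * yh = yh * xh := Subtype.ext hxy
        have h1 : yh⁻¹ * xh⁻¹ * yh * xh = (xh * yh)⁻¹ * (yh * xh) := by group
        rw [h1, h2, inv_mul_cancel]
        exact N.one_mem
    have hq : π (xh * yh) = π (yh * xh) := by
      apply QuotientGroup.eq.mpr
      have h3 : (xh * yh)⁻¹ * (yh * xh) = yh⁻¹ * xh⁻¹ * yh * xh := by group
      rw [h3]
      exact hmem
    simpa [map_mul] using hq
  set T : Subgroup (↥G ⧸ N) := ⨆ v ∈ {v : Vtx A 0 | v.len = u.len}, Sq v with hTdef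
  have hristle : ristLev G u.len ≤ G :=
    iSup_le fun v => iSup_le fun hv => fun z hz => (mem_rist_iff.mp hz).1
  have hT : ∀ x (hx : x ∈ ristLev G u.len) (hxG : x ∈ G), π ⟨x, hxG⟩ ∈ T := by
    intro x hx
    refine Subgroup.iSup_induction'
      (S := fun v => ⨆ _ : v ∈ {v : Vtx A 0 | v.len = u.len}, rist G v)
      (C := fun z _ => ∀ hzG : z ∈ G, π ⟨z, hzG⟩ ∈ T) ?_ ?_ ?_ hx
    · intro v z hz hzG
      by_cases hv : v ∈ {v : Vtx A 0 | v.len = u.len}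
      · have hle : (⨆ _ : v ∈ {v : Vtx A 0 | v.len = u.len}, rist G v) ≤ rist G v :=
          iSup_le fun _ => le_rfl
        have hz2 : z ∈ rist G v := hle hz
        have h1 : π ⟨z, hzG⟩ ∈ Sq v :=
          Subgroup.mem_map.mpr ⟨⟨z, hzG⟩, Subgroup.mem_subgroupOf.mpr hz2, rfl⟩
        exact (le_iSup₂ (f := fun v (_ : v ∈ {v : Vtx A 0 | v.len = u.len}) => Sq v) v hv) h1
      · have hle : (⨆ _ : v ∈ {v : Vtx A 0 | v.len = u.len}, rist G v) ≤
            (⊥ : Subgroup (Equiv.Perm (Vtx A 0))) := iSup_le fun hv' => absurd hv' hv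
        have hz2 : z ∈ (⊥ : Subgroup (Equiv.Perm (Vtx A 0))) := hle hz
        rw [Subgroup.mem_bot] at hz2
        subst hz2
        have h1 : (⟨1, hzG⟩ : ↥G) = 1 := rfl
        rw [h1, map_one]
        exact T.one_mem
    · intro hzG
      have h1 : (⟨1, hzG⟩ : ↥G) = 1 := rfl
      rw [h1, map_one]
      exact T.one_mem
    · intro z1 z2 h1 h2 ih1 ih2 hzG
      have hz1G : z1 ∈ G := hristle h1
      have hz2G : z2 ∈ G := hristle h2
      have h3 : (⟨z1 * z2, hzG⟩ : ↥G) = ⟨z1, hz1G⟩ * ⟨z2, hz2G⟩ := rfl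
      rw [h3, map_mul]
      exact T.mul_mem (ih1 hz1G) (ih2 hz2G)
  have habT : ∀ a ∈ T, ∀ b ∈ T, a * b = b * a := by
    have stepA : ∀ w (hw : w ∈ {v : Vtx A 0 | v.len = u.len}), ∀ y ∈ Sq w,
        T ≤ Subgroup.centralizer {y} := by
      intro w hw y hy
      refine iSup_le fun v => iSup_le fun hv => ?_
      intro c hc
      rw [Subgroup.mem_centralizer_iff]
      rintro z hz
      rw [Set.mem_singleton_iff] at hz
      subst hz
      exact comm_pair w hw v hv _ hy c hc
    intro a ha b hb
    have stepB : T ≤ Subgroup.centralizer {a} := by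
      refine iSup_le fun w => iSup_le fun hw => ?_
      intro y hy
      rw [Subgroup.mem_centralizer_iff]
      rintro z hz
      rw [Set.mem_singleton_iff] at hz
      subst hz
      exact (Subgroup.mem_centralizer_iff.mp (stepA w hw _ hy ha) _ rfl).symm
    exact Subgroup.mem_centralizer_iff.mp (stepB hb) a rfl
  have hAq : ((ristLev G u.len).subgroupOf G).map π ≤ T := by
    rintro q ⟨xh, hxh, rfl⟩
    have hxh2 : (xh : Equiv.Perm (Vtx A 0)) ∈ ristLev G u.len := hxh
    exact hT xh.1 hxh2 xh.2
  have hAqi : (((ristLev G u.len).subgroupOf G).map π).index ≠ 0 := by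
    have hd := Subgroup.index_map_dvd (H := (ristLev G u.len).subgroupOf G)
      (QuotientGroup.mk'_surjective N)
    have hrel : ((ristLev G u.len).subgroupOf G).index ≠ 0 := hG.rist_fi u.len
    exact fun h0 => hrel (by rwa [h0, zero_dvd_iff] at hd)
  have hTi : T.index ≠ 0 := by
    have hd := Subgroup.index_dvd_of_le hAq
    exact fun h0 => hAqi (by rwa [h0, zero_dvd_iff] at hd)
  exact bf_of_abelian T habT hTi K hK
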